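/- For every quaternion q ∈ ℍ there is a unique complex number λ_q with Im(λ_q) ≥ 0 such that q is similar to λ_q (i.e., q = h⁻¹ λ_q h for some nonzero h ∈ ℍ, regarding ℂ ⊂ ℍ). -/

import Mathlib

open scoped Quaternion

/-- The embedding of `ℂ` into the quaternions `ℍ` (as the span of `1` and `i`). -/
noncomputable def complexToQuat (z : ℂ) : ℍ[ℝ] := ⟨z.re, z.im, 0, 0⟩

lemma re_mul_comm (a b : ℍ[ℝ]) : (a * b).re = (b * a).re := by
  simp [Quaternion.re_mul]; ring

lemma re_conj (h x : ℍ[ℝ]) (hh : h ≠ 0) : (h⁻¹ * x * h).re = x.re := by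
  rw [mul_assoc, re_mul_comm, mul_assoc, mul_inv_cancel₀ hh, mul_one]

lemma normSq_conj (h x : ℍ[ℝ]) (hh : h ≠ 0) :
    Quaternion.normSq (h⁻¹ * x * h) = Quaternion.normSq x := by
  have : ‖h⁻¹ * x * h‖ = ‖x‖ := by
    rw [norm_mul, norm_mul, norm_inv]
    field_simp [norm_ne_zero_iff.mpr hh]
  rw [Quaternion.normSq_eq_norm_mul_self, Quaternion.normSq_eq_norm_mul_self, this]

lemma normSq_expand (a : ℍ[ℝ]) :
    (Quaternion.normSq a : ℝ) = a.re^2 + a.imI^2 + a.imJ^2 + a.imK^2 := by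
  rw [Quaternion.normSq_def]; simp [Quaternion.re_mul, Quaternion.re_star]; ring

lemma conj_of_mul (h x y : ℍ[ℝ]) (hh : h ≠ 0) (hm : h * x = y * h) :
    x = h⁻¹ * y * h := by
  rw [mul_assoc, ← hm, ← mul_assoc, inv_mul_cancel₀ hh, one_mul]

/-- For every quaternion `q` there is a unique complex number `λ` with `Im(λ) ≥ 0`
such that `q` is similar to `λ`, i.e. `q = h⁻¹ λ h` for some nonzero `h ∈ ℍ`. -/
theorem quaternion_similar_unique_complex (q : ℍ[ℝ]) :
    ∃! lam : ℂ, 0 ≤ lam.im ∧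
      ∃ h : ℍ[ℝ], h ≠ 0 ∧ q = h⁻¹ * complexToQuat lam * h := by
  set r : ℝ := Real.sqrt (q.imI^2 + q.imJ^2 + q.imK^2) with hr
  have hsum : (0:ℝ) ≤ q.imI^2 + q.imJ^2 + q.imK^2 := by positivity
  have hr0 : 0 ≤ r := Real.sqrt_nonneg _
  have hr2 : r^2 = q.imI^2 + q.imJ^2 + q.imK^2 := Real.sq_sqrt hsum
  refine ⟨⟨q.re, r⟩, ⟨hr0, ?_⟩, ?_⟩
  · -- existence of h
    by_cases hv : q.imJ = 0 ∧ q.imK = 0 ∧ q.imI = -r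
    · obtain ⟨h1, h2, h3⟩ := hv
      refine ⟨⟨0,0,1,0⟩, ?_, ?_⟩
      · intro hc; simpa using congrArg QuaternionAlgebra.imJ hc
      · apply conj_of_mul _ _ _ (by intro hc; simpa using congrArg QuaternionAlgebra.imJ hc)
        ext
        · erw [Quaternion.re_mul, Quaternion.re_mul]; simp [complexToQuat, h1, h2, h3]
        · erw [Quaternion.imI_mul, Quaternion.imI_mul]; simp [complexToQuat, h1, h2, h3]
        · erw [Quaternion.imJ_mul, Quaternion.imJ_mul]; simp [complexToQuat, h1, h2, h3]
        · erw [Quaternion.imK_mul, Quaternion.imK_mul]; simp [complexToQuat, h1, h2, h3]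
    · refine ⟨⟨0, r + q.imI, q.imJ, q.imK⟩, ?_, ?_⟩
      · intro hc
        replace hc := QuaternionAlgebra.ext_iff.mp hc
        simp only [Quaternion.imI_zero, Quaternion.imJ_zero, Quaternion.imK_zero] at hc
        exact hv ⟨hc.2.2.1, hc.2.2.2, by linarith [hc.2.1]⟩
      · apply conj_of_mul _ _ _ ?hne
        case hne =>
          intro hc
          replace hc := QuaternionAlgebra.ext_iff.mp hc
          simp only [Quaternion.imI_zero, Quaternion.imJ_zero, Quaternion.imK_zero] at hc
          exact hv ⟨hc.2.2.1, hc.2.2.2, by linarith [hc.2.1]⟩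
        ext
        · erw [Quaternion.re_mul, Quaternion.re_mul]; simp [complexToQuat]; nlinarith [hr2]
        · erw [Quaternion.imI_mul, Quaternion.imI_mul]; simp [complexToQuat]; nlinarith [hr2]
        · erw [Quaternion.imJ_mul, Quaternion.imJ_mul]; simp [complexToQuat]; nlinarith [hr2]
        · erw [Quaternion.imK_mul, Quaternion.imK_mul]; simp [complexToQuat]; nlinarith [hr2]
  · -- uniqueness
    rintro lam ⟨him, h, hh, hq⟩
    have hre : q.re = lam.re := by
      rw [hq, re_conj _ _ hh]; rfl
    have hns : Quaternion.normSq q = Quaternion.normSq (complexToQuat lam) := by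
      rw [hq, normSq_conj _ _ hh]
    rw [normSq_expand, normSq_expand] at hns
    simp only [complexToQuat] at hns
    have hre2 : q.re^2 = lam.re^2 := by rw [hre]
    have him2 : lam.im^2 = r^2 := by rw [hr2]; linarith [hns, hre2]
    have : lam.im = r := by nlinarith [him, hr0, him2]
    apply Complex.ext
    · exact hre.symm
    · exact this
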